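/- The n×n tridiagonal matrix T₂ with diagonal entries (2, 2, ..., 2, √2), off-diagonal entries +1 except the last off-diagonal entry 1/√2, is symmetric positive semi-definite. -/

import Mathlib

open Matrix

noncomputable def T2 (n : ℕ) : Matrix (Fin n) (Fin n) ℝ :=
  Matrix.of fun i j =>
    if i = j then (if (i : ℕ) = n - 1 then Real.sqrt 2 else 2)
    else if (i : ℕ) + 1 = (j : ℕ) ∨ (j : ℕ) + 1 = (i : ℕ) then
      (if (i : ℕ) = n - 1 ∨ (j : ℕ) = n - 1 then 1 / Real.sqrt 2 else 1)
    else 0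

noncomputable def Bmat (n : ℕ) : Matrix (Fin (n+1)) (Fin n) ℝ :=
  Matrix.of fun k j =>
    if (k:ℕ) = 0 then (if (j:ℕ) = 0 then 1 else 0)
    else if (j:ℕ) + 1 = (k:ℕ) then (if (k:ℕ) = n then Real.sqrt (Real.sqrt 2 - 1/2) else 1)
    else if (j:ℕ) = (k:ℕ) then (if (k:ℕ) = n - 1 then Real.sqrt 2 / 2 else 1)
    else 0

lemma Bmat_zero {n : ℕ} (k : Fin (n+1)) (j : Fin n) (h1 : (k:ℕ) ≠ (j:ℕ))
    (h2 : (k:ℕ) ≠ (j:ℕ) + 1) : Bmat n k j = 0 := by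
  simp only [Bmat, Matrix.of_apply]
  split_ifs with a b c <;> first | rfl | omega | exact ‹False›.elim

set_option maxHeartbeats 1000000 in
lemma key (n : ℕ) (hn : 2 ≤ n) : T2 n = (Bmat n)ᴴ * (Bmat n) := by
  have hs2 : Real.sqrt 2 * Real.sqrt 2 = 2 := Real.mul_self_sqrt (by norm_num)
  have hs2pos : (1:ℝ) ≤ Real.sqrt 2 := by nlinarith [Real.sqrt_nonneg 2]
  have hc : Real.sqrt (Real.sqrt 2 - 1/2) * Real.sqrt (Real.sqrt 2 - 1/2)
      = Real.sqrt 2 - 1/2 := Real.mul_self_sqrt (by linarith)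
  have hhalf : (1:ℝ) / Real.sqrt 2 = Real.sqrt 2 / 2 := by
    rw [div_eq_div_iff (by linarith) (by norm_num), one_mul, hs2]
  ext i j
  have hi := i.isLt
  have hj := j.isLt
  rw [Matrix.mul_apply]
  have hsub : (Finset.univ : Finset (Fin (n+1))).sum (fun k => (Bmat n)ᴴ i k * Bmat n k j)
      = ({i.castSucc, i.succ} : Finset (Fin (n+1))).sum (fun k => (Bmat n)ᴴ i k * Bmat n k j) := by
    refine (Finset.sum_subset (Finset.subset_univ _) ?_).symm
    intro k _ hk
    simp only [Finset.mem_insert, Finset.mem_singleton, not_or] at hk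
    have h1 : (k:ℕ) ≠ (i:ℕ) := fun h => hk.1 (Fin.ext (by simp [h]))
    have h2 : (k:ℕ) ≠ (i:ℕ) + 1 := fun h => hk.2 (Fin.ext (by simp [h]))
    rw [Matrix.conjTranspose_apply, Bmat_zero k i h1 h2]
    simp
  rw [hsub, Finset.sum_pair (by simp [Fin.ext_iff])]
  simp only [Matrix.conjTranspose_apply, star_trivial]
  have hBci : Bmat n i.castSucc i = if (i:ℕ) = n - 1 then Real.sqrt 2 / 2 else 1 := by
    simp only [Bmat, Matrix.of_apply, Fin.coe_castSucc]
    split_ifs <;> first | rfl | omega | exact ‹False›.elim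
  have hBsi : Bmat n i.succ i
      = if (i:ℕ) + 1 = n then Real.sqrt (Real.sqrt 2 - 1/2) else 1 := by
    simp only [Bmat, Matrix.of_apply, Fin.val_succ]
    split_ifs <;> first | rfl | omega | exact ‹False›.elim
  rcases Nat.lt_trichotomy (i:ℕ) (j:ℕ) with hij | hij | hij
  · -- i < j
    have hBcj : Bmat n i.castSucc j = 0 := Bmat_zero _ _ (by simp; omega) (by simp; omega)
    by_cases h1 : (i:ℕ) + 1 = (j:ℕ)
    · have hBsj : Bmat n i.succ j = if (j:ℕ) = n - 1 then Real.sqrt 2 / 2 else 1 := by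
        simp only [Bmat, Matrix.of_apply, Fin.val_succ]
        split_ifs <;> first | rfl | omega | exact ‹False›.elim
      simp only [T2, Matrix.of_apply, hBci, hBsi, hBcj, hBsj, hhalf, Fin.ext_iff]
      split_ifs <;> first | omega | exact ‹False›.elim | nlinarith [hs2, hc]
    · have hBsj : Bmat n i.succ j = 0 := Bmat_zero _ _ (by simp; omega) (by simp; omega)
      simp only [T2, Matrix.of_apply, hBcj, hBsj, Fin.ext_iff]
      split_ifs <;> first | omega | exact ‹False›.elim | ring
  · -- i = j
    have hij' : i = j := Fin.ext hij
    subst hij'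
    simp only [T2, Matrix.of_apply, hBci, hBsi, Fin.ext_iff]
    split_ifs <;> first | omega | exact ‹False›.elim | nlinarith [hs2, hc]
  · -- j < i
    have hBsj : Bmat n i.succ j = 0 := Bmat_zero _ _ (by simp; omega) (by simp; omega)
    by_cases h1 : (j:ℕ) + 1 = (i:ℕ)
    · have hBcj : Bmat n i.castSucc j
          = if (i:ℕ) = n then Real.sqrt (Real.sqrt 2 - 1/2) else 1 := by
        simp only [Bmat, Matrix.of_apply, Fin.coe_castSucc]
        split_ifs <;> first | rfl | omega | exact ‹False›.elim
      simp only [T2, Matrix.of_apply, hBci, hBsi, hBcj, hBsj, hhalf, Fin.ext_iff]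
      split_ifs <;> first | omega | exact ‹False›.elim | nlinarith [hs2, hc]
    · have hBcj : Bmat n i.castSucc j = 0 := Bmat_zero _ _ (by simp; omega) (by simp; omega)
      simp only [T2, Matrix.of_apply, hBcj, hBsj, Fin.ext_iff]
      split_ifs <;> first | omega | exact ‹False›.elim | ring
  
/-- `T₂` is symmetric positive semi-definite. -/
theorem stmt_6 (n : ℕ) : (T2 n).PosSemidef := by
  rcases n with _ | _ | n
  · refine Matrix.posSemidef_iff_dotProduct_mulVec.mpr ⟨?_, fun x => ?_⟩
    · ext i j; exact i.elim0
    · simp [dotProduct]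
  · refine Matrix.posSemidef_iff_dotProduct_mulVec.mpr ⟨?_, fun x => ?_⟩
    · ext i j
      fin_cases i; fin_cases j; simp [T2]
    · simp only [T2, Matrix.mulVec, dotProduct, Fin.sum_univ_succ, Fin.sum_univ_zero,
        Matrix.of_apply, star_trivial]
      norm_num
      nlinarith [sq_nonneg (x 0), Real.sqrt_nonneg 2]
  · rw [key (n+2) (by omega)]
    exact Matrix.posSemidef_conjTranspose_mul_self _
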